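/- Let z₁,…,z_m and r₁,…,r_n be nonzero complex numbers closed under conjugation, each rᵢ with Re rᵢ < 0, and K ∈ ℝ with T(s) = K·∏ᵢ(s − zᵢ)/∏ᵢ(s − rᵢ) and K·∏ᵢ(−zᵢ) = ∏ᵢ(−rᵢ). Then (1/2π)·∫_{−∞}^{∞} ln|T(jω)| dω/ω² = (1/2)·[Σᵢ |Re zᵢ⁻¹| − Σᵢ |Re rᵢ⁻¹|]. -/

import Mathlib

open MeasureTheory Real Complex
open Set intervalIntegral Filter Topology


lemma log_bound {c : ℝ} {x : ℝ} (hx : 0 < x) (hxc : x ≤ c) :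
    |Real.log x| ≤ 2 * x ^ (-(1/2) : ℝ) + |Real.log c| := by
  rcases le_or_gt x 1 with h1 | h1
  · have hlog : Real.log x ≤ 0 := Real.log_nonpos hx.le h1
    rw [_root_.abs_of_nonpos hlog]
    have h2 : -Real.log x = 2 * Real.log (x ^ (-(1/2) : ℝ)) := by
      rw [Real.log_rpow hx]; ring
    have h3 : Real.log (x ^ (-(1/2) : ℝ)) ≤ x ^ (-(1/2) : ℝ) - 1 :=
      Real.log_le_sub_one_of_pos (Real.rpow_pos_of_pos hx _)
    nlinarith [abs_nonneg (Real.log c), Real.rpow_pos_of_pos hx (-(1/2) : ℝ)]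
  · have hlog : 0 ≤ Real.log x := Real.log_nonneg h1.le
    rw [_root_.abs_of_nonneg hlog]
    have : Real.log x ≤ Real.log c := Real.log_le_log hx hxc
    have : Real.log c ≤ |Real.log c| := le_abs_self _
    have h0 : (0:ℝ) ≤ 2 * x ^ (-(1/2) : ℝ) := by positivity
    linarith

lemma intervalIntegrable_log'' (a b : ℝ) : IntervalIntegrable Real.log volume a b := by
  have key : ∀ c : ℝ, 0 < c → IntervalIntegrable Real.log volume 0 c := by
    intro c hc
    have hg : IntervalIntegrable (fun x : ℝ => 2 * x ^ (-(1/2) : ℝ) + |Real.log c|)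
        volume 0 c := by
      apply IntervalIntegrable.add
      · exact (intervalIntegral.intervalIntegrable_rpow' (by norm_num)).const_mul 2
      · exact intervalIntegrable_const
    rw [intervalIntegrable_iff_integrableOn_Ioc_of_le hc.le] at hg ⊢
    refine hg.integrable.mono Real.measurable_log.aestronglyMeasurable.restrict ?_
    rw [ae_restrict_iff' measurableSet_Ioc]
    refine ae_of_all _ fun x hx => ?_
    have hx0 := hx.1
    have h1 := log_bound hx0 hx.2
    simp only [Real.norm_eq_abs]
    exact h1.trans (le_abs_self _)
  set c := max (max (|a|) (|b|)) 1 with hcdef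
  have hc : 0 < c := lt_of_lt_of_le one_pos (le_max_right _ _)
  have hpos : IntervalIntegrable Real.log volume 0 c := key c hc
  have hneg : IntervalIntegrable Real.log volume (-c) 0 := by
    have := (IntervalIntegrable.iff_comp_neg (f := Real.log) (a := 0) (b := c)).mp hpos
    simpa [Real.log_neg_eq_log] using this.symm
  refine (hneg.trans hpos).mono_set ?_
  rw [Set.uIcc_subset_uIcc_iff_le]
  have ha : |a| ≤ c := (le_max_left _ _).trans (le_max_left _ _)
  have hb : |b| ≤ c := (le_max_right _ _).trans (le_max_left _ _)
  obtain ⟨ha1, ha2⟩ := abs_le.mp ha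
  obtain ⟨hb1, hb2⟩ := abs_le.mp hb
  have e1 : -c ⊓ c = -c := min_eq_left (by linarith)
  have e2 : -c ⊔ c = c := max_eq_right (by linarith)
  rw [e1, e2]
  exact ⟨le_min ha1 hb1, max_le ha2 hb2⟩

noncomputable def psi (α β : ℝ) (x : ℝ) : ℝ := (1/2) * Real.log (α^2 + (x - β)^2) - Real.log x

noncomputable def Phi (α β : ℝ) (x : ℝ) : ℝ :=
  (1/2) * (x - β) * Real.log (α^2 + (x - β)^2) + α * Real.arctan ((x - β)/α) - x * Real.log x

lemma intervalIntegrable_psi (α β a b : ℝ) : IntervalIntegrable (psi α β) volume a b := by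
  unfold psi
  apply IntervalIntegrable.sub _ (intervalIntegrable_log'' a b)
  rcases eq_or_ne α 0 with h|h
  · subst h
    have heq : (fun x : ℝ => (1/2) * Real.log ((0:ℝ)^2 + (x - β)^2))
        = fun x : ℝ => Real.log (x - β) := by
      funext x
      rw [show (0:ℝ)^2 + (x - β)^2 = (x - β)^2 by ring, Real.log_pow]
      push_cast; ring
    rw [heq]
    have := (intervalIntegrable_log'' (a - β) (b - β)).comp_sub_right β
    simpa using this
  · apply Continuous.intervalIntegrable
    have hA : ∀ x : ℝ, α^2 + (x - β)^2 ≠ 0 := fun x => by positivity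
    exact continuous_const.mul ((continuous_const.add
      ((continuous_id.sub continuous_const).pow 2)).log hA)

lemma continuous_Phi (α β : ℝ) : Continuous (Phi α β) := by
  unfold Phi
  apply Continuous.sub _ Real.continuous_mul_log
  apply Continuous.add
  · rcases eq_or_ne α 0 with h|h
    · subst h
      have heq : (fun x : ℝ => (1/2) * (x - β) * Real.log ((0:ℝ)^2 + (x - β)^2))
          = fun x : ℝ => (x - β) * Real.log (x - β) := by
        funext x
        rw [show (0:ℝ)^2 + (x - β)^2 = (x - β)^2 by ring, Real.log_pow]
        push_cast; ring
      rw [heq]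
      exact Real.continuous_mul_log.comp (continuous_id.sub continuous_const)
    · have hA : ∀ x : ℝ, α^2 + (x - β)^2 ≠ 0 := fun x => by positivity
      exact (continuous_const.mul (continuous_id.sub continuous_const)).mul
        ((continuous_const.add ((continuous_id.sub continuous_const).pow 2)).log hA)
  · rcases eq_or_ne α 0 with h|h
    · subst h; simpa using continuous_const (y := (0:ℝ))
    · exact continuous_const.mul (Real.continuous_arctan.comp
        ((continuous_id.sub continuous_const).div_const α))

lemma Phi_odd (α β x : ℝ) : Phi α (-β) (-x) = -(Phi α β x) := by
  unfold Phi
  have h1 : Real.log (-x) = Real.log x := Real.log_neg_eq_log x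
  have h2 : -x - -β = -(x - β) := by ring
  have h3 : (-(x - β))^2 = (x - β)^2 := by ring
  have h4 : Real.arctan (-(x - β)/α) = -Real.arctan ((x - β)/α) := by
    rw [neg_div, Real.arctan_neg]
  rw [h2, h3, h4, h1]
  ring

lemma hasDerivAt_Phi (α β x : ℝ) (hx : x ≠ 0) (hx2 : α ≠ 0 ∨ x ≠ β) :
    HasDerivAt (Phi α β) (psi α β x) x := by
  have hA : 0 < α^2 + (x - β)^2 := by
    rcases hx2 with h|h
    · positivity
    · have h2 : (x - β)^2 > 0 := by
        have := sub_ne_zero.mpr h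
        positivity
      nlinarith [sq_nonneg α]
  have hu : HasDerivAt (fun y : ℝ => α^2 + (y - β)^2) (2*(x - β)) x := by
    have h1 : HasDerivAt (fun y : ℝ => (y - β)^2) (2*(x - β)) x := by
      have := ((hasDerivAt_id x).sub_const β).pow 2
      simpa [Pi.pow_def] using this
    simpa using h1.const_add (α^2)
  have hlog : HasDerivAt (fun y : ℝ => Real.log (α^2 + (y - β)^2))
      (2*(x - β)/(α^2 + (x - β)^2)) x := hu.log hA.ne'
  have hlin : HasDerivAt (fun y : ℝ => (1/2) * (y - β)) (1/2) x := by
    simpa using ((hasDerivAt_id x).sub_const β).const_mul (1/2 : ℝ)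
  have t1 : HasDerivAt (fun y : ℝ => (1/2) * (y - β) * Real.log (α^2 + (y - β)^2))
      ((1/2) * Real.log (α^2 + (x - β)^2) + ((1/2)*(x - β)) * (2*(x - β)/(α^2 + (x - β)^2))) x := by
    simpa [Pi.mul_def] using hlin.mul hlog
  have t3 : HasDerivAt (fun y : ℝ => y * Real.log y) (Real.log x + 1) x :=
    Real.hasDerivAt_mul_log hx
  rcases eq_or_ne α 0 with hα|hα
  · subst hα
    have t2 : HasDerivAt (fun y : ℝ => (0:ℝ) * Real.arctan ((y - β)/0)) 0 x := by
      simpa using hasDerivAt_const x (0:ℝ)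
    have := (t1.add t2).sub t3
    have hxβ : x ≠ β := hx2.resolve_left (by simp)
    have hsub : x - β ≠ 0 := sub_ne_zero.mpr hxβ
    refine this.congr_deriv ?_
    unfold psi
    field_simp
    ring
  · have harc : HasDerivAt (fun y : ℝ => Real.arctan ((y - β)/α))
        ((1 / (1 + ((x - β)/α)^2)) * (1/α)) x := by
      have hlin2 : HasDerivAt (fun y : ℝ => (y - β)/α) (1/α) x := by
        simpa using ((hasDerivAt_id x).sub_const β).div_const α
      simpa [Function.comp_def] using (Real.hasDerivAt_arctan ((x - β)/α)).comp x hlin2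
    have t2 : HasDerivAt (fun y : ℝ => α * Real.arctan ((y - β)/α))
        (α * ((1 / (1 + ((x - β)/α)^2)) * (1/α))) x := harc.const_mul α
    have := (t1.add t2).sub t3
    refine this.congr_deriv ?_
    unfold psi
    have h1 : 1 + ((x - β)/α)^2 ≠ 0 := by positivity
    field_simp
    ring

noncomputable def hh (α β : ℝ) (x : ℝ) : ℝ := (1/2) * (psi α β x + psi α (-β) x)
noncomputable def HH (α β : ℝ) (x : ℝ) : ℝ := (1/2) * (Phi α β x + Phi α (-β) x)

lemma continuous_HH (α β : ℝ) : Continuous (HH α β) :=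
  continuous_const.mul ((continuous_Phi α β).add (continuous_Phi α (-β)))

lemma hasDerivAt_HH (α β x : ℝ) (h0 : x ≠ 0) (h1 : x ≠ β) (h2 : x ≠ -β) :
    HasDerivAt (HH α β) (hh α β x) x := by
  have d1 := hasDerivAt_Phi α β x h0 (Or.inr h1)
  have d2 := hasDerivAt_Phi α (-β) x h0 (Or.inr h2)
  have hder := (d1.add d2).const_mul (1/2 : ℝ)
  show HasDerivAt (fun y => (1/2 : ℝ) * (Phi α β y + Phi α (-β) y))
    ((1/2 : ℝ) * (psi α β x + psi α (-β) x)) x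
  simpa [mul_add] using hder

lemma HH_odd (α β x : ℝ) : HH α β (-x) = -(HH α β x) := by
  have e1 := Phi_odd α (-β) x
  have e2 := Phi_odd α β x
  rw [neg_neg] at e1
  simp only [HH, e2]
  rw [e1]
  ring

lemma intervalIntegrable_hh (α β a b : ℝ) : IntervalIntegrable (hh α β) volume a b := by
  unfold hh
  exact ((intervalIntegrable_psi α β a b).add (intervalIntegrable_psi α (-β) a b)).const_mul _

lemma ftc_hh (α β u v : ℝ) (huv : u ≤ v)
    (hS : ∀ x ∈ Ioo u v, x ≠ 0 ∧ x ≠ β ∧ x ≠ -β) :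
    ∫ x in u..v, hh α β x = HH α β v - HH α β u :=
  integral_eq_sub_of_hasDerivAt_of_le huv (continuous_HH α β).continuousOn
    (fun x hx => hasDerivAt_HH α β x (hS x hx).1 (hS x hx).2.1 (hS x hx).2.2)
    (intervalIntegrable_hh α β u v)

lemma integral_hh_symm (α β R : ℝ) (hR : |β| ≤ R) :
    ∫ x in (-R)..R, hh α β x = 2 * HH α β R := by
  have hβR : -R ≤ -|β| := neg_le_neg hR
  have hβ0 : (0:ℝ) ≤ |β| := abs_nonneg β
  have hb1 : -|β| ≤ β := neg_abs_le β
  have hb2 : β ≤ |β| := le_abs_self β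
  have i1 : ∫ x in (-R)..(-|β|), hh α β x = HH α β (-|β|) - HH α β (-R) :=
    ftc_hh _ _ _ _ hβR fun x hx => by
      refine ⟨?_, ?_, ?_⟩ <;> rcases abs_cases β with ⟨hab, _⟩ | ⟨hab, _⟩ <;>
        [skip; skip; skip; skip; skip; skip] <;>
        (intro hc; rw [hc] at hx; rcases hx with ⟨q1, q2⟩; linarith)
  have i2 : ∫ x in (-|β|)..0, hh α β x = HH α β 0 - HH α β (-|β|) :=
    ftc_hh _ _ _ _ (by linarith) fun x hx => by
      refine ⟨ne_of_lt hx.2, ?_, ?_⟩ <;> rcases abs_cases β with ⟨hab, _⟩ | ⟨hab, _⟩ <;>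
        (intro hc; rw [hc] at hx; rcases hx with ⟨q1, q2⟩; linarith)
  have i3 : ∫ x in (0:ℝ)..(|β|), hh α β x = HH α β (|β|) - HH α β 0 :=
    ftc_hh _ _ _ _ hβ0 fun x hx => by
      refine ⟨ne_of_gt hx.1, ?_, ?_⟩ <;> rcases abs_cases β with ⟨hab, _⟩ | ⟨hab, _⟩ <;>
        (intro hc; rw [hc] at hx; rcases hx with ⟨q1, q2⟩; linarith)
  have i4 : ∫ x in (|β|)..R, hh α β x = HH α β R - HH α β (|β|) :=
    ftc_hh _ _ _ _ hR fun x hx => by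
      refine ⟨?_, ?_, ?_⟩ <;> rcases abs_cases β with ⟨hab, _⟩ | ⟨hab, _⟩ <;>
        (intro hc; rw [hc] at hx; rcases hx with ⟨q1, q2⟩; linarith)
  have a1 := intervalIntegral.integral_add_adjacent_intervals
    (intervalIntegrable_hh α β (-R) (-|β|)) (intervalIntegrable_hh α β (-|β|) 0)
  have a2 := intervalIntegral.integral_add_adjacent_intervals
    (intervalIntegrable_hh α β (-R) 0) (intervalIntegrable_hh α β 0 (|β|))
  have a3 := intervalIntegral.integral_add_adjacent_intervals
    (intervalIntegrable_hh α β (-R) (|β|)) (intervalIntegrable_hh α β (|β|) R)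
  have hodd := HH_odd α β R
  rw [← a1] at a2
  rw [← a2] at a3
  rw [← a3, i1, i2, i3, i4, hodd]
  ring

lemma tendsto_aux1 (c : ℝ) : Tendsto (fun x : ℝ => x * Real.log (1 + c/x^2)) atTop (𝓝 0) := by
  have h1 : Tendsto (fun y : ℝ => y * Real.log (1 + c/y)) atTop (𝓝 c) :=
    Real.tendsto_mul_log_one_add_div_atTop c
  have h2 : Tendsto (fun x : ℝ => x^2) atTop atTop := tendsto_pow_atTop two_ne_zero
  have h3 := h1.comp h2
  have h4 : Tendsto (fun x : ℝ => x⁻¹) atTop (𝓝 0) := tendsto_inv_atTop_zero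
  have h5 := h4.mul h3
  rw [zero_mul] at h5
  apply h5.congr'
  filter_upwards [eventually_gt_atTop (0:ℝ)] with x hx
  have : x ≠ 0 := ne_of_gt hx
  show x⁻¹ * (x^2 * Real.log (1 + c/x^2)) = x * Real.log (1 + c/x^2)
  rw [← mul_assoc, pow_two, ← mul_assoc, inv_mul_cancel₀ this, one_mul]

lemma tendsto_aux2 (β : ℝ) :
    Tendsto (fun R : ℝ => (R - β) * Real.log (1 - β/R)) atTop (𝓝 (-β)) := by
  have h1 : Tendsto (fun R : ℝ => R * Real.log (1 + (-β)/R)) atTop (𝓝 (-β)) :=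
    Real.tendsto_mul_log_one_add_div_atTop (-β)
  have h0 : Tendsto (fun R : ℝ => 1 + (-β)/R) atTop (𝓝 1) := by
    have : Tendsto (fun R : ℝ => (-β)/R) atTop (𝓝 0) :=
      tendsto_const_nhds.div_atTop tendsto_id
    simpa using tendsto_const_nhds.add this
  have h2 : Tendsto (fun R : ℝ => Real.log (1 + (-β)/R)) atTop (𝓝 0) := by
    have := ((Real.continuousAt_log one_ne_zero).tendsto).comp h0
    simpa [Function.comp_def] using this
  have h3 := h1.sub (h2.const_mul β)
  rw [mul_zero, sub_zero] at h3
  apply h3.congr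
  intro R
  rw [show (1:ℝ) + -β/R = 1 - β/R by ring]
  ring

lemma tendsto_arctan_comb (α β : ℝ) :
    Tendsto (fun R : ℝ => α * Real.arctan ((R - β)/α) + α * Real.arctan ((R + β)/α))
      atTop (𝓝 (π * |α|)) := by
  rcases lt_trichotomy α 0 with h | h | h
  · have hdiv : ∀ γ : ℝ, Tendsto (fun R : ℝ => (R - γ)/α) atTop atBot := by
      intro γ
      have h1 : Tendsto (fun R : ℝ => R - γ) atTop atTop := by
        simpa [sub_eq_add_neg] using tendsto_atTop_add_const_right atTop (-γ) tendsto_id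
      have h2 := h1.atTop_div_const (neg_pos.2 h)
      have h3 := tendsto_neg_atTop_atBot.comp h2
      apply h3.congr
      intro R
      simp [Function.comp, div_neg]
    have harc : ∀ γ : ℝ, Tendsto (fun R : ℝ => Real.arctan ((R - γ)/α)) atTop (𝓝 (-(π/2))) :=
      fun γ => (tendsto_arctan_atBot.mono_right nhdsWithin_le_nhds).comp (hdiv γ)
    have hcomb := ((harc β).const_mul α).add ((harc (-β)).const_mul α)
    rw [_root_.abs_of_neg h]
    have heq : α * -(π/2) + α * -(π/2) = π * -α := by ring
    rw [heq] at hcomb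
    apply hcomb.congr
    intro R
    rw [sub_neg_eq_add]
  · subst h
    have : ∀ R : ℝ, (0:ℝ) * Real.arctan ((R - β)/0) + 0 * Real.arctan ((R + β)/0) = 0 := by
      intro R; ring
    rw [show π * |(0:ℝ)| = 0 by simp]
    exact Tendsto.congr (fun R => (this R).symm) tendsto_const_nhds
  · have hdiv : ∀ γ : ℝ, Tendsto (fun R : ℝ => (R - γ)/α) atTop atTop := by
      intro γ
      have h1 : Tendsto (fun R : ℝ => R - γ) atTop atTop :=
        by simpa [sub_eq_add_neg] using tendsto_atTop_add_const_right atTop (-γ) tendsto_id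
      exact h1.atTop_div_const h
    have harc : ∀ γ : ℝ, Tendsto (fun R : ℝ => Real.arctan ((R - γ)/α)) atTop (𝓝 (π/2)) :=
      fun γ => (tendsto_arctan_atTop.mono_right nhdsWithin_le_nhds).comp (hdiv γ)
    have := ((harc β).const_mul α).add ((harc (-β)).const_mul α)
    rw [_root_.abs_of_pos h]
    have heq : α * (π/2) + α * (π/2) = π * α := by ring
    rw [heq] at this
    apply this.congr
    intro R
    rw [sub_neg_eq_add]

lemma twoHH_eq (α β R : ℝ) (hR : |β| + 1 ≤ R) :
    2 * HH α β R =
      ((1/2) * ((R - β) * Real.log (1 + α^2/(R - β)^2)) + (R - β) * Real.log (1 - β/R))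
      + ((1/2) * ((R + β) * Real.log (1 + α^2/(R + β)^2)) + (R + β) * Real.log (1 - (-β)/R))
      + (α * Real.arctan ((R - β)/α) + α * Real.arctan ((R + β)/α)) := by
  have hb1 : -|β| ≤ β := neg_abs_le β
  have hb2 : β ≤ |β| := le_abs_self β
  have hu : 0 < R - β := by linarith
  have hv : 0 < R + β := by linarith
  have hR0 : 0 < R := by have := abs_nonneg β; linarith
  have key : ∀ γ : ℝ, 0 < R - γ →
      (1/2) * ((R - γ) * Real.log (1 + α^2/(R - γ)^2)) + (R - γ) * Real.log (1 - γ/R)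
      = (1/2) * (R - γ) * Real.log (α^2 + (R - γ)^2) - (R - γ) * Real.log R := by
    intro γ hγ
    have hne : R - γ ≠ 0 := ne_of_gt hγ
    have e1 : 1 + α^2/(R - γ)^2 = (α^2 + (R - γ)^2)/(R - γ)^2 := by field_simp; ring
    have e2 : 1 - γ/R = (R - γ)/R := by field_simp
    have hA : α^2 + (R - γ)^2 ≠ 0 := by positivity
    rw [e1, e2, Real.log_div hA (by positivity), Real.log_div hne (ne_of_gt hR0),
      Real.log_pow]
    push_cast
    ring
  have k1 := key β hu
  have k2 := key (-β) (by rw [sub_neg_eq_add]; exact hv)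
  rw [sub_neg_eq_add] at k2
  rw [k1, k2]
  unfold HH Phi
  rw [show R - -β = R + β from sub_neg_eq_add R β]
  ring

lemma tendsto_twoHH (α β : ℝ) :
    Tendsto (fun R : ℝ => 2 * HH α β R) atTop (𝓝 (π * |α|)) := by
  have hshift : ∀ γ : ℝ, Tendsto (fun R : ℝ => R - γ) atTop atTop := fun γ => by
    simpa [sub_eq_add_neg] using tendsto_atTop_add_const_right atTop (-γ) tendsto_id
  have A : ∀ γ : ℝ, Tendsto
      (fun R : ℝ => (1/2) * ((R - γ) * Real.log (1 + α^2/(R - γ)^2))) atTop (𝓝 0) := by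
    intro γ
    have := ((tendsto_aux1 (α^2)).comp (hshift γ)).const_mul (1/2 : ℝ)
    simpa [Function.comp] using this
  have B : ∀ γ : ℝ, Tendsto (fun R : ℝ => (R - γ) * Real.log (1 - γ/R)) atTop (𝓝 (-γ)) :=
    tendsto_aux2
  have C := tendsto_arctan_comb α β
  have total := (((A β).add (B β)).add ((A (-β)).add (B (-β)))).add C
  have : (0 : ℝ) + -β + (0 + -(-β)) + π * |α| = π * |α| := by ring
  rw [this] at total
  apply total.congr'
  filter_upwards [eventually_ge_atTop (|β| + 1)] with R hR
  rw [twoHH_eq α β R hR]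
  rw [sub_neg_eq_add]

lemma hh_eq_log (α β x : ℝ) (hx : 0 < x) (hβ : |β| < x) :
    hh α β x = (1/4) * Real.log (((α^2 + (x - β)^2) * (α^2 + (x + β)^2)) / x^4) := by
  have hb1 : -|β| ≤ β := neg_abs_le β
  have hb2 : β ≤ |β| := le_abs_self β
  have hu : 0 < x - β := by linarith
  have hv : 0 < x + β := by linarith
  have hA : (0:ℝ) < α^2 + (x - β)^2 := by positivity
  have hB : (0:ℝ) < α^2 + (x + β)^2 := by positivity
  unfold hh psi
  rw [sub_neg_eq_add, Real.log_div (mul_pos hA hB).ne' (by positivity),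
    Real.log_mul hA.ne' hB.ne', Real.log_pow]
  push_cast
  ring

noncomputable def ccst (α β : ℝ) : ℝ := |β| + 1 + |(α^2 + β^2)^2 / (2*(β^2 - α^2))|

lemma ccst_ge (α β : ℝ) : |β| + 1 ≤ ccst α β := by
  unfold ccst
  have := abs_nonneg ((α^2 + β^2)^2 / (2*(β^2 - α^2)))
  linarith

lemma hh_sign (α β : ℝ) : ∃ ε : ℝ, |ε| = 1 ∧
    ∀ x : ℝ, ccst α β ≤ x → |hh α β x| = ε * hh α β x := by
  have hβ1 : ∀ x : ℝ, ccst α β ≤ x → |β| < x := fun x hx => by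
    have := ccst_ge α β; linarith
  have hx0 : ∀ x : ℝ, ccst α β ≤ x → 0 < x := fun x hx => by
    have := hβ1 x hx; have := abs_nonneg β; linarith
  rcases le_or_gt (β^2) (α^2) with hcase | hcase
  · refine ⟨1, by norm_num, fun x hx => ?_⟩
    rw [one_mul, hh_eq_log α β x (hx0 x hx) (hβ1 x hx)]
    have hpos : (0:ℝ) < x^4 := by have := hx0 x hx; positivity
    have hge : x^4 ≤ (α^2 + (x - β)^2) * (α^2 + (x + β)^2) := by
      nlinarith [mul_nonneg (sub_nonneg.2 hcase) (sq_nonneg x), sq_nonneg (α^2 + β^2)]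
    have : (0:ℝ) ≤ (1/4) * Real.log (((α^2 + (x - β)^2) * (α^2 + (x + β)^2)) / x^4) := by
      have := Real.log_nonneg ((one_le_div hpos).2 hge)
      linarith
    exact _root_.abs_of_nonneg this
  · refine ⟨-1, by norm_num, fun x hx => ?_⟩
    have hx0' := hx0 x hx
    have hβ1' := hβ1 x hx
    rw [hh_eq_log α β x hx0' hβ1']
    have hpos : (0:ℝ) < x^4 := by positivity
    have hd : (0:ℝ) < 2*(β^2 - α^2) := by linarith
    have hxc : (α^2 + β^2)^2 / (2*(β^2 - α^2)) ≤ x := by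
      have h1 : (α^2 + β^2)^2 / (2*(β^2 - α^2)) ≤ |(α^2 + β^2)^2 / (2*(β^2 - α^2))| :=
        le_abs_self _
      have h2 := ccst_ge α β
      unfold ccst at hx
      have := abs_nonneg β
      linarith
    have hx1 : (1:ℝ) ≤ x := by
      have := ccst_ge α β; have := abs_nonneg β; linarith
    have hmul : (α^2 + β^2)^2 ≤ 2*(β^2 - α^2) * x := by
      rw [div_le_iff₀ hd] at hxc; linarith [hxc]
    have hxx : x ≤ x^2 := by nlinarith
    have hle : (α^2 + (x - β)^2) * (α^2 + (x + β)^2) ≤ x^4 := by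
      nlinarith [mul_le_mul_of_nonneg_left hxx (le_of_lt hd)]
    have hnum : (0:ℝ) ≤ (α^2 + (x - β)^2) * (α^2 + (x + β)^2) := by positivity
    have : (1/4) * Real.log (((α^2 + (x - β)^2) * (α^2 + (x + β)^2)) / x^4) ≤ 0 := by
      have := Real.log_nonpos (by positivity) ((div_le_one hpos).2 hle)
      linarith
    rw [_root_.abs_of_nonpos this]
    ring

lemma hh_even (α β x : ℝ) : hh α β (-x) = hh α β x := by
  unfold hh psi
  have h1 : Real.log (-x) = Real.log x := Real.log_neg_eq_log x
  have h2 : (-x - β)^2 = (x + β)^2 := by ring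
  have h3 : (-x - -β)^2 = (x - β)^2 := by ring
  rw [h1, h2, h3]
  ring

lemma ftc_hh_pos (α β u v : ℝ) (hu : |β| < u) (huv : u ≤ v) :
    ∫ x in u..v, hh α β x = HH α β v - HH α β u := by
  apply ftc_hh α β u v huv
  intro x hx
  have hb1 : -|β| ≤ β := neg_abs_le β
  have hb2 : β ≤ |β| := le_abs_self β
  have h0 := abs_nonneg β
  exact ⟨by intro h; rw [h] at hx; linarith [hx.1],
    by intro h; rw [h] at hx; linarith [hx.1],
    by intro h; rw [h] at hx; linarith [hx.1]⟩

lemma integrableOn_hh_Ioi (α β : ℝ) : IntegrableOn (hh α β) (Ioi (ccst α β)) := by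
  obtain ⟨ε, hε, hsign⟩ := hh_sign α β
  set c := ccst α β with hc
  have hβc : |β| < c := by have := ccst_ge α β; linarith
  have hLim := tendsto_twoHH α β
  set L : ℝ := π * |α| with hL
  have hbddev : ∀ᶠ R in atTop, |2 * HH α β R| ≤ |L| + 1 := by
    have habs := hLim.abs
    exact habs.eventually_le_const (lt_add_one _)
  set I : ℝ := (|L| + 1)/2 + |HH α β c| + 1 with hI
  apply integrableOn_Ioi_of_intervalIntegral_norm_bounded I c
    (fun R : ℝ => (intervalIntegrable_hh α β c R).1) tendsto_id
  filter_upwards [eventually_ge_atTop c, hbddev] with R hcR hbdd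
  have heqnorm : ∫ x in c..R, ‖hh α β x‖ = ε * ∫ x in c..R, hh α β x := by
    rw [← intervalIntegral.integral_const_mul]
    apply intervalIntegral.integral_congr
    intro x hx
    rw [Set.uIcc_of_le hcR] at hx
    exact (hsign x hx.1)
  rw [heqnorm, ftc_hh_pos α β c R hβc hcR]
  have hεle : |ε| ≤ 1 := le_of_eq hε
  have h1 : ε * (HH α β R - HH α β c) ≤ |HH α β R| + |HH α β c| := by
    have : |ε * (HH α β R - HH α β c)| ≤ |HH α β R - HH α β c| := by
      rw [abs_mul, hε, one_mul]
    calc ε * (HH α β R - HH α β c) ≤ |ε * (HH α β R - HH α β c)| := le_abs_self _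
      _ ≤ |HH α β R - HH α β c| := this
      _ ≤ |HH α β R| + |HH α β c| := abs_sub _ _
  have h2 : |HH α β R| ≤ (|L| + 1)/2 := by
    have : |2 * HH α β R| = 2 * |HH α β R| := by rw [abs_mul]; norm_num
    rw [this] at hbdd; linarith
  rw [hI]
  linarith

lemma integrable_hh (α β : ℝ) : Integrable (hh α β) := by
  set c := ccst α β with hc
  have hc0 : 0 < c := by have := ccst_ge α β; have := abs_nonneg β; linarith
  have hIoi := integrableOn_hh_Ioi α β
  have hIic : IntegrableOn (hh α β) (Iio (-c)) := by
    have hpre : (Neg.neg : ℝ → ℝ) ⁻¹' (Ioi c) = Iio (-c) := by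
      ext x; simp [lt_neg]
    have := (MeasurePreserving.integrableOn_comp_preimage
      (Measure.measurePreserving_neg (volume : Measure ℝ))
      (Homeomorph.neg ℝ).measurableEmbedding (s := Ioi c) (f := hh α β)).2 hIoi
    rw [hpre] at this
    exact this.congr_fun (fun x _ => (hh_even α β x)) measurableSet_Iio
  have hmid : IntegrableOn (hh α β) (Icc (-c) c) := by
    have := (intervalIntegrable_hh α β (-c) c)
    rwa [intervalIntegrable_iff_integrableOn_Icc_of_le (by linarith)] at this
  rw [← integrableOn_univ]
  have hcover : (univ : Set ℝ) ⊆ Iio (-c) ∪ (Icc (-c) c ∪ Ioi c) := by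
    intro x _
    rcases lt_or_ge x (-c) with h | h
    · exact Or.inl h
    rcases le_or_gt x c with h2 | h2
    · exact Or.inr (Or.inl ⟨h, h2⟩)
    · exact Or.inr (Or.inr h2)
  exact ((hIic.union (hmid.union hIoi)).mono_set hcover)

lemma integral_hh (α β : ℝ) : ∫ x, hh α β x = π * |α| := by
  have h1 := intervalIntegral_tendsto_integral (integrable_hh α β)
    tendsto_neg_atTop_atBot tendsto_id
  have h2 : (fun R : ℝ => ∫ x in (-R)..R, hh α β x) =ᶠ[atTop]
      (fun R : ℝ => 2 * HH α β R) := by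
    filter_upwards [eventually_ge_atTop (|β|)] with R hR
    exact integral_hh_symm α β R hR
  exact tendsto_nhds_unique (h1.congr' h2) (tendsto_twoHH α β)

lemma factor_log (w : ℂ) (hw : w ≠ 0) (x : ℝ) (hx : x ≠ 0)
    (hsw : ((-x⁻¹ : ℝ) : ℂ) * I ≠ w) :
    Real.log (‖((-x⁻¹ : ℝ) : ℂ) * I - w‖)
      = Real.log (‖w‖) + psi (w⁻¹).re (w⁻¹).im x := by
  set ξ : ℂ := (x : ℂ) + I * w⁻¹ with hξ
  have hxC : (x : ℂ) ≠ 0 := Complex.ofReal_ne_zero.mpr hx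
  have key : ((-x⁻¹ : ℝ) : ℂ) * I - w = (-w/(x:ℂ)) * ξ := by
    rw [hξ]
    push_cast
    field_simp
    ring
  have hξne : ξ ≠ 0 := by
    intro h
    rw [h, mul_zero] at key
    exact hsw (sub_eq_zero.mp key)
  have hre : ξ.re = x - (w⁻¹).im := by simp [hξ]; ring
  have him : ξ.im = (w⁻¹).re := by simp [hξ]
  have habs2 : (‖ξ‖)^2 = (w⁻¹).re^2 + (x - (w⁻¹).im)^2 := by
    rw [Complex.sq_norm, Complex.normSq_apply, hre, him]
    ring
  have hlogξ : Real.log (‖ξ‖) = (1/2) * Real.log ((w⁻¹).re^2 + (x - (w⁻¹).im)^2) := by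
    rw [← habs2, Real.log_pow]
    push_cast
    ring
  rw [key, norm_mul, norm_div, norm_neg]
  rw [Real.log_mul (div_ne_zero ((norm_ne_zero_iff.mpr hw)) ((norm_ne_zero_iff.mpr hxC)))
    ((norm_ne_zero_iff.mpr hξne))]
  rw [Real.log_div ((norm_ne_zero_iff.mpr hw)) ((norm_ne_zero_iff.mpr hxC))]
  rw [Complex.norm_real, Real.norm_eq_abs, Real.log_abs, hlogξ]
  unfold psi
  ring

lemma sum_conj {m : ℕ} (z : Fin m → ℂ)
    (hzc : Multiset.map (starRingEnd ℂ) ↑(List.ofFn z) = ↑(List.ofFn z))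
    (F : ℂ → ℝ) : (∑ i, F ((starRingEnd ℂ) (z i))) = ∑ i, F (z i) := by
  have h := congrArg (fun M : Multiset ℂ => (M.map F).sum) hzc
  simpa [Multiset.map_coe, Multiset.sum_coe, List.map_ofFn, List.sum_ofFn,
    Function.comp] using h

lemma hw_half (w : ℂ) (x : ℝ) :
    hh (w⁻¹).re (w⁻¹).im x = (1/2) * (psi (w⁻¹).re (w⁻¹).im x
      + psi ((((starRingEnd ℂ) w))⁻¹).re ((((starRingEnd ℂ) w))⁻¹).im x) := by
  have h1 : ((starRingEnd ℂ) w)⁻¹ = (starRingEnd ℂ) (w⁻¹) := (map_inv₀ (starRingEnd ℂ) w).symm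
  rw [h1, Complex.conj_re, Complex.conj_im]
  rfl

lemma sum_psi_eq_sum_hh {m : ℕ} (z : Fin m → ℂ)
    (hzc : Multiset.map (starRingEnd ℂ) ↑(List.ofFn z) = ↑(List.ofFn z)) (x : ℝ) :
    (∑ i, psi ((z i)⁻¹).re ((z i)⁻¹).im x) = ∑ i, hh ((z i)⁻¹).re ((z i)⁻¹).im x := by
  have h1 : ∀ i, hh ((z i)⁻¹).re ((z i)⁻¹).im x
      = (1/2) * (psi ((z i)⁻¹).re ((z i)⁻¹).im x
        + psi ((((starRingEnd ℂ) (z i)))⁻¹).re ((((starRingEnd ℂ) (z i)))⁻¹).im x) :=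
    fun i => hw_half (z i) x
  rw [Finset.sum_congr rfl (fun i _ => h1 i)]
  rw [← Finset.mul_sum, Finset.sum_add_distrib]
  rw [sum_conj z hzc (fun w => psi (w⁻¹).re (w⁻¹).im x)]
  ring

lemma G_decomp {m n : ℕ} (K : ℝ) (z : Fin m → ℂ) (hz : ∀ i, z i ≠ 0)
    (r : Fin n → ℂ) (hr : ∀ i, r i ≠ 0) (hrstab : ∀ i, (r i).re < 0)
    (T : ℂ → ℂ) (hT : ∀ s, T s = (K:ℂ) * (∏ i, (s - z i)) / (∏ i, (s - r i)))
    (hT0 : (K : ℂ) * (∏ i, (-(z i))) = ∏ i, (-(r i))) (hK : K ≠ 0)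
    (x : ℝ) (hx : x ≠ 0) (hsz : ∀ i, ((-x⁻¹ : ℝ) : ℂ) * I ≠ z i) :
    Real.log (‖T (((-x⁻¹ : ℝ):ℂ) * I)‖)
      = (∑ i, psi ((z i)⁻¹).re ((z i)⁻¹).im x)
        - ∑ i, psi ((r i)⁻¹).re ((r i)⁻¹).im x := by
  set s : ℂ := ((-x⁻¹ : ℝ):ℂ) * I with hs
  have hsre : s.re = 0 := by simp [hs]
  have hsr : ∀ i, s ≠ r i := by
    intro i h
    have : s.re = (r i).re := by rw [h]
    rw [hsre] at this
    linarith [hrstab i]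
  have hsrne : ∀ i, s - r i ≠ 0 := fun i => sub_ne_zero.mpr (hsr i)
  have hszne : ∀ i, s - z i ≠ 0 := fun i => sub_ne_zero.mpr (hsz i)
  have hKC : (K : ℂ) ≠ 0 := Complex.ofReal_ne_zero.mpr hK
  have hKabs : ‖(K:ℂ)‖ ≠ 0 := (norm_ne_zero_iff.mpr hKC)
  have hprodz : ∀ i : Fin m, ‖s - z i‖ ≠ 0 := fun i => (norm_ne_zero_iff.mpr (hszne i))
  have hprodr : ∀ i : Fin n, ‖s - r i‖ ≠ 0 := fun i => (norm_ne_zero_iff.mpr (hsrne i))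
  -- constant identity
  have hconst : Real.log (‖(K:ℂ)‖) + ∑ i, Real.log (‖z i‖)
      = ∑ i, Real.log (‖r i‖) := by
    have h1 := congrArg (fun u : ℂ => Real.log (‖u‖)) hT0
    simp only [norm_mul, norm_prod, norm_neg] at h1
    rw [Real.log_mul hKabs (Finset.prod_ne_zero_iff.mpr
      (fun i _ => (norm_ne_zero_iff.mpr (hz i)))), Real.log_prod
      (fun i _ => (norm_ne_zero_iff.mpr (hz i))), Real.log_prod
      (fun i _ => (norm_ne_zero_iff.mpr (hr i)))] at h1
    exact h1
  rw [hT s]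
  rw [norm_div, norm_mul, norm_prod, norm_prod]
  rw [Real.log_div (mul_ne_zero hKabs (Finset.prod_ne_zero_iff.mpr fun i _ => hprodz i))
    (Finset.prod_ne_zero_iff.mpr fun i _ => hprodr i)]
  rw [Real.log_mul hKabs (Finset.prod_ne_zero_iff.mpr fun i _ => hprodz i)]
  rw [Real.log_prod (fun i _ => hprodz i), Real.log_prod (fun i _ => hprodr i)]
  have hfz : ∀ i : Fin m, Real.log (‖s - z i‖)
      = Real.log (‖z i‖) + psi ((z i)⁻¹).re ((z i)⁻¹).im x :=
    fun i => factor_log (z i) (hz i) x hx (hsz i)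
  have hfr : ∀ i : Fin n, Real.log (‖s - r i‖)
      = Real.log (‖r i‖) + psi ((r i)⁻¹).re ((r i)⁻¹).im x :=
    fun i => factor_log (r i) (hr i) x hx (hsr i)
  rw [Finset.sum_congr rfl (fun i _ => hfz i), Finset.sum_congr rfl (fun i _ => hfr i)]
  rw [Finset.sum_add_distrib, Finset.sum_add_distrib]
  linarith [hconst]


theorem continuous_time_CSBI (m n : ℕ) (K : ℝ)
    (z : Fin m → ℂ) (hz : ∀ i, z i ≠ 0)
    (r : Fin n → ℂ) (hr : ∀ i, r i ≠ 0) (hrstab : ∀ i, (r i).re < 0)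
    (hzconj : Multiset.map (starRingEnd ℂ) ↑(List.ofFn z) = ↑(List.ofFn z))
    (hrconj : Multiset.map (starRingEnd ℂ) ↑(List.ofFn r) = ↑(List.ofFn r))
    (T : ℂ → ℂ)
    (hT : ∀ s, T s = (K : ℂ) * (∏ i, (s - z i)) / (∏ i, (s - r i)))
    (hT0 : (K : ℂ) * (∏ i, (-(z i))) = ∏ i, (-(r i))) :
    (1 / (2 * π)) * ∫ ω : ℝ, Real.log (‖T ((ω : ℂ) * Complex.I)‖) / ω^2 =
      (1 / 2) * ((∑ i, |((z i)⁻¹).re|) - ∑ i, |((r i)⁻¹).re|) := by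
  have hK : K ≠ 0 := by
    intro h
    rw [h] at hT0
    simp only [Complex.ofReal_zero, zero_mul] at hT0
    obtain ⟨i, _, hi⟩ := Finset.prod_eq_zero_iff.mp hT0.symm
    exact hr i (neg_eq_zero.mp hi)
  set g : ℝ → ℝ := fun ω => Real.log (‖T ((ω : ℂ) * Complex.I)‖) / ω^2 with hg
  set G : ℝ → ℝ := fun x => Real.log (‖T (((-x⁻¹ : ℝ) : ℂ) * Complex.I)‖) with hGdef
  have hs0 : ({0}ᶜ : Set ℝ) =ᵐ[volume] (univ : Set ℝ) := by
    rw [ae_eq_univ, compl_compl]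
    exact measure_singleton 0
  have hmeas : MeasurableSet ({0}ᶜ : Set ℝ) := (measurableSet_singleton 0).compl
  -- change of variables
  have hCoV : ∫ ω, g ω = ∫ x, G x := by
    have hderiv : ∀ x ∈ ({0}ᶜ : Set ℝ),
        HasDerivWithinAt (fun y : ℝ => -y⁻¹) ((x^2)⁻¹) ({0}ᶜ) x := by
      intro x hx
      have := (hasDerivAt_inv (by simpa using hx)).neg
      rw [neg_neg] at this
      exact this.hasDerivWithinAt
    have hinj : InjOn (fun y : ℝ => -y⁻¹) ({0}ᶜ : Set ℝ) := by
      intro a _ b _ h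
      have : a⁻¹ = b⁻¹ := by linarith [h]
      exact inv_injective this
    have himg : (fun y : ℝ => -y⁻¹) '' ({0}ᶜ) = ({0}ᶜ : Set ℝ) := by
      ext y
      constructor
      · rintro ⟨x, hx, rfl⟩
        simp only [mem_compl_iff, mem_singleton_iff] at hx ⊢
        simp [hx]
      · intro hy
        simp only [mem_compl_iff, mem_singleton_iff] at hy
        refine ⟨-y⁻¹, by simp [hy], ?_⟩
        show -(-y⁻¹)⁻¹ = y
        rw [inv_neg, neg_neg, inv_inv]
    have key := integral_image_eq_integral_abs_deriv_smul hmeas hderiv hinj g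
    rw [himg] at key
    have e1 : ∫ ω, g ω = ∫ ω in ({0}ᶜ : Set ℝ), g ω := by
      rw [setIntegral_congr_set hs0, setIntegral_univ]
    have e2 : ∫ x in ({0}ᶜ : Set ℝ), |((x:ℝ)^2)⁻¹| • g (-x⁻¹) = ∫ x in ({0}ᶜ : Set ℝ), G x := by
      apply setIntegral_congr_fun hmeas
      intro x hx
      have hx0 : x ≠ 0 := by simpa using hx
      have hx2 : ((x:ℝ)^2)⁻¹ ≠ 0 := by positivity
      simp only [hg, hGdef, smul_eq_mul]
      rw [_root_.abs_of_nonneg (by positivity : (0:ℝ) ≤ ((x:ℝ)^2)⁻¹)]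
      rw [show (-x⁻¹)^2 = ((x:ℝ)^2)⁻¹ by rw [neg_pow]; simp [inv_pow]]
      field_simp
    have e3 : ∫ x in ({0}ᶜ : Set ℝ), G x = ∫ x, G x := by
      rw [setIntegral_congr_set hs0, setIntegral_univ]
    rw [e1, key, e2, e3]
  -- a.e. identity
  set Gsum : ℝ → ℝ := fun x =>
    (∑ i, hh ((z i)⁻¹).re ((z i)⁻¹).im x) - ∑ i, hh ((r i)⁻¹).re ((r i)⁻¹).im x with hGsum
  have hae : G =ᵐ[volume] Gsum := by
    set N : Set ℝ := {0} ∪ ⋃ i, {x : ℝ | ((-x⁻¹ : ℝ) : ℂ) * Complex.I = z i} with hN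
    have hNnull : volume N = 0 := by
      apply measure_union_null (measure_singleton 0)
      apply measure_iUnion_null
      intro i
      apply Set.Subsingleton.measure_zero
      intro x hx y hy
      simp only [mem_setOf_eq] at hx hy
      have h1 : ((-x⁻¹ : ℝ) : ℂ) = ((-y⁻¹ : ℝ) : ℂ) :=
        mul_right_cancel₀ Complex.I_ne_zero (hx.trans hy.symm)
      have h2 : -x⁻¹ = -y⁻¹ := Complex.ofReal_inj.mp h1
      have : x⁻¹ = y⁻¹ := by linarith
      exact inv_injective this
    filter_upwards [measure_eq_zero_iff_ae_notMem.mp hNnull] with x hxN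
    have hx0 : x ≠ 0 := fun h => hxN (Or.inl h)
    have hsz : ∀ i, ((-x⁻¹ : ℝ) : ℂ) * Complex.I ≠ z i := by
      intro i h
      exact hxN (Or.inr (mem_iUnion.mpr ⟨i, h⟩))
    rw [hGdef, hGsum]
    simp only []
    rw [G_decomp K z hz r hr hrstab T hT hT0 hK x hx0 hsz]
    rw [sum_psi_eq_sum_hh z hzconj x, sum_psi_eq_sum_hh r hrconj x]
  have hint : ∫ x, G x = π * ((∑ i, |((z i)⁻¹).re|) - ∑ i, |((r i)⁻¹).re|) := by
    rw [integral_congr_ae hae, hGsum]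
    have hiz : Integrable (fun x => ∑ i, hh ((z i)⁻¹).re ((z i)⁻¹).im x) :=
      integrable_finset_sum _ (fun i _ => integrable_hh _ _)
    have hir : Integrable (fun x => ∑ i, hh ((r i)⁻¹).re ((r i)⁻¹).im x) :=
      integrable_finset_sum _ (fun i _ => integrable_hh _ _)
    rw [integral_sub hiz hir, integral_finset_sum _ (fun i _ => integrable_hh _ _),
      integral_finset_sum _ (fun i _ => integrable_hh _ _)]
    simp only [integral_hh]
    rw [← Finset.mul_sum, ← Finset.mul_sum]
    ring
  rw [hCoV, hint]
  have hπ : π ≠ 0 := Real.pi_ne_zero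
  field_simp
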